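/- Let G be a real polynomial with only real zeros and deg G ≥ n ≥ 1, and let a₁,…,aₙ > 0. Then all roots of the one-variable polynomial Pₙ(t) = Σ_σ G(σ·(ia₁,…,iaₙ)) t^{|σ|}, where the sum is over all sign vectors σ ∈ {±1}ⁿ and |σ| is the number of +1 entries of σ, lie on the unit circle. -/

import Mathlib

open Complex Polynomial Finset

private lemma factor_bound (a : ℝ) (ha : 0 < a) (s z : ℂ) (hs : 0 ≤ s.re) (hz : z.re ≤ 0) :
    ‖s - a - z‖ ≤ ‖s + a - z‖ := by
  rw [Complex.norm_def, Complex.norm_def]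
  apply Real.sqrt_le_sqrt
  simp only [Complex.normSq_apply, Complex.sub_re, Complex.sub_im, Complex.add_re,
    Complex.add_im, Complex.ofReal_re, Complex.ofReal_im]
  nlinarith [hs, hz, ha.le]

private lemma prod_bound (a : ℝ) (s : ℂ) (m : Multiset ℂ)
    (h : ∀ z ∈ m, ‖s - a - z‖ ≤ ‖s + a - z‖) :
    ‖(m.map (fun z => s - a - z)).prod‖ ≤
      ‖(m.map (fun z => s + a - z)).prod‖ := by
  induction m using Multiset.induction_on with
  | empty => simp
  | cons z m ih =>
    simp only [Multiset.map_cons, Multiset.prod_cons, norm_mul]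
    exact mul_le_mul (h z (Multiset.mem_cons_self _ _))
      (ih fun w hw => h w (Multiset.mem_cons_of_mem hw))
      (norm_nonneg _) (norm_nonneg _)

private lemma eval_bound (F : Polynomial ℂ) (hF : ∀ s : ℂ, F.eval s = 0 → s.re ≤ 0)
    (a : ℝ) (ha : 0 < a) (s : ℂ) (hs : 0 ≤ s.re) :
    ‖F.eval (s - a)‖ ≤ ‖F.eval (s + a)‖ := by
  by_cases hF0 : F = 0
  · simp [hF0]
  have hsplit : F.Splits := IsAlgClosed.splits F
  have hfac := hsplit.eq_prod_roots
  have key : ∀ w : ℂ, F.eval w = F.leadingCoeff * ((F.roots.map fun z => w - z).prod) := by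
    intro w
    conv_lhs => rw [hfac]
    simp [eval_multiset_prod, Multiset.map_map, Function.comp]
  rw [key (s - a), key (s + a), norm_mul, norm_mul]
  refine mul_le_mul_of_nonneg_left ?_ (norm_nonneg _)
  exact prod_bound a s _ fun z hz =>
    factor_bound a ha s z hs (hF z (isRoot_of_mem_roots hz))

private lemma step_ne_zero (F : Polynomial ℂ)
    (hF : ∀ s : ℂ, F.eval s = 0 → s.re ≤ 0)
    (a : ℝ) (ha : 0 < a) (t : ℂ) (ht : 1 < ‖t‖)
    (s : ℂ) (hs : 0 ≤ s.re) :
    t * F.eval (s + a) + F.eval (s - a) ≠ 0 := by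
  have h1 : F.eval (s + (a : ℂ)) ≠ 0 := by
    intro h
    have := hF _ h
    simp only [Complex.add_re, Complex.ofReal_re] at this
    linarith
  have h1' : 0 < ‖F.eval (s + a)‖ := by
    simpa [norm_pos_iff] using h1
  have h2 := eval_bound F hF a ha s hs
  intro h
  have h3 : t * F.eval (s + a) = - F.eval (s - a) := by linear_combination h
  have h4 : ‖t‖ * ‖F.eval (s + a)‖ = ‖F.eval (s - a)‖ := by
    rw [← norm_mul, h3, norm_neg]
  nlinarith

private lemma split_sum (n : ℕ) (F : Polynomial ℂ) (a : Fin (n + 1) → ℝ) (t s : ℂ) :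
    ∑ ε : Fin (n + 1) → Bool,
      F.eval (s + ∑ k, (if ε k then (1 : ℂ) else -1) * (a k : ℂ)) *
        t ^ (Finset.univ.filter (fun k => ε k = true)).card
    = ∑ ε : Fin n → Bool,
      (C t * F.comp (X + C ((a 0 : ℝ) : ℂ)) + F.comp (X - C ((a 0 : ℝ) : ℂ))).eval
          (s + ∑ k, (if ε k then (1 : ℂ) else -1) * (a k.succ : ℂ)) *
        t ^ (Finset.univ.filter (fun k => ε k = true)).card := by
  rw [← (Fin.consEquiv (fun _ : Fin (n+1) => Bool)).sum_comp]
  rw [Fintype.sum_prod_type]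
  rw [Fintype.sum_bool]
  rw [← Finset.sum_add_distrib]
  refine Finset.sum_congr rfl fun ε _ => ?_
  have hcard : ∀ b : Bool, (Finset.univ.filter
      (fun k => Fin.consEquiv (fun _ : Fin (n+1) => Bool) (b, ε) k = true)).card
      = (if b then 1 else 0) + (Finset.univ.filter (fun k => ε k = true)).card := by
    intro b
    rw [Finset.card_filter, Finset.card_filter, Fin.sum_univ_succ]
    simp [Fin.consEquiv]
  have hsumT : (∑ k, (if Fin.consEquiv (fun _ : Fin (n+1) => Bool) (true, ε) k
        then (1 : ℂ) else -1) * (a k : ℂ))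
      = (a 0 : ℂ) + ∑ k : Fin n, (if ε k then (1 : ℂ) else -1) * (a k.succ : ℂ) := by
    rw [Fin.sum_univ_succ]; simp [Fin.consEquiv]
  have hsumF : (∑ k, (if Fin.consEquiv (fun _ : Fin (n+1) => Bool) (false, ε) k
        then (1 : ℂ) else -1) * (a k : ℂ))
      = -(a 0 : ℂ) + ∑ k : Fin n, (if ε k then (1 : ℂ) else -1) * (a k.succ : ℂ) := by
    rw [Fin.sum_univ_succ]; simp [Fin.consEquiv]
  rw [hcard, hcard, hsumT, hsumF]
  have e1 : s + ((a 0 : ℂ) + ∑ k : Fin n, (if ε k then (1 : ℂ) else -1) * (a k.succ : ℂ))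
      = (s + ∑ k : Fin n, (if ε k then (1 : ℂ) else -1) * (a k.succ : ℂ)) + (a 0 : ℂ) := by
    ring
  have e2 : s + (-(a 0 : ℂ) + ∑ k : Fin n, (if ε k then (1 : ℂ) else -1) * (a k.succ : ℂ))
      = (s + ∑ k : Fin n, (if ε k then (1 : ℂ) else -1) * (a k.succ : ℂ)) - (a 0 : ℂ) := by
    ring
  rw [e1, e2]
  simp only [if_pos rfl, eval_add, eval_mul, eval_C, eval_comp, eval_X, eval_sub, pow_add,
    pow_one, Bool.false_eq_true, if_false, if_true]
  ring

-- the "one step" polynomial is nonvanishing on the closed right half plane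
private lemma stepPoly (F : Polynomial ℂ)
    (hF : ∀ s : ℂ, F.eval s = 0 → s.re ≤ 0)
    (a : ℝ) (ha : 0 < a) (t : ℂ) (ht : 1 < ‖t‖) :
    ∀ s : ℂ, 0 ≤ s.re →
      (C t * F.comp (X + C (a : ℂ)) + F.comp (X - C (a : ℂ))).eval s ≠ 0 := by
  intro s hs
  have := step_ne_zero F hF a ha t ht s hs
  simpa [eval_comp] using this

private lemma key : ∀ (n : ℕ) (F : Polynomial ℂ),
    (∀ s : ℂ, 0 ≤ s.re → F.eval s ≠ 0) →
    ∀ (a : Fin n → ℝ), (∀ k, 0 < a k) →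
    ∀ (t : ℂ), 1 < ‖t‖ →
    ∀ (s : ℂ), 0 ≤ s.re →
    ∑ ε : Fin n → Bool,
      F.eval (s + ∑ k, (if ε k then (1 : ℂ) else -1) * (a k : ℂ)) *
        t ^ (Finset.univ.filter (fun k => ε k = true)).card ≠ 0 := by
  intro n
  induction n with
  | zero =>
    intro F hF a ha t ht s hs
    simpa [Finset.univ_unique] using hF s hs
  | succ n ih =>
    intro F hF a ha t ht s hs
    rw [split_sum]
    set F' := C t * F.comp (X + C ((a 0 : ℝ) : ℂ)) + F.comp (X - C ((a 0 : ℝ) : ℂ)) with hF'def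
    have hF0 : F ≠ 0 := fun h => hF 1 (by norm_num) (by simp [h])
    have hFle : ∀ w : ℂ, F.eval w = 0 → w.re ≤ 0 := by
      intro w hw
      by_contra hc
      exact hF w (le_of_lt (not_le.mp hc)) hw
    have hF' : ∀ w : ℂ, 0 ≤ w.re → F'.eval w ≠ 0 :=
      stepPoly F hFle (a 0) (ha 0) t ht
    exact ih F' hF' (fun k => a k.succ) (fun k => ha k.succ) t ht s hs

private lemma big_ne_zero (n : ℕ) (hn : 1 ≤ n) (G : Polynomial ℝ)
    (hroots : ∀ z : ℂ, (G.map (algebraMap ℝ ℂ)).eval z = 0 → z.im = 0)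
    (a : Fin n → ℝ) (ha : ∀ k, 0 < a k)
    (u : ℂ) (hu : 1 < ‖u‖) :
    ∑ ε : Fin n → Bool,
      (G.map (algebraMap ℝ ℂ)).eval
          (I * (∑ k, (if ε k then (1 : ℂ) else -1) * (a k : ℂ)))
        * u ^ (Finset.univ.filter (fun k => ε k = true)).card ≠ 0 := by
  set F : Polynomial ℂ := (G.map (algebraMap ℝ ℂ)).comp (C I * X) with hFdef
  have hFeval : ∀ w : ℂ, F.eval w = (G.map (algebraMap ℝ ℂ)).eval (I * w) := by
    intro w; simp [hFdef, eval_comp]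
  have hFle : ∀ w : ℂ, F.eval w = 0 → w.re ≤ 0 := by
    intro w hw
    rw [hFeval] at hw
    have := hroots _ hw
    simp [Complex.mul_im] at this
    simp [this]
  obtain ⟨m, rfl⟩ : ∃ m, n = m + 1 := ⟨n - 1, by omega⟩
  have hrw : ∑ ε : Fin (m + 1) → Bool,
      (G.map (algebraMap ℝ ℂ)).eval
          (I * (∑ k, (if ε k then (1 : ℂ) else -1) * (a k : ℂ)))
        * u ^ (Finset.univ.filter (fun k => ε k = true)).card
      = ∑ ε : Fin (m + 1) → Bool,
      F.eval ((0 : ℂ) + ∑ k, (if ε k then (1 : ℂ) else -1) * (a k : ℂ))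
        * u ^ (Finset.univ.filter (fun k => ε k = true)).card := by
    refine Finset.sum_congr rfl fun ε _ => ?_
    rw [hFeval, zero_add]
  rw [hrw, split_sum]
  exact key m _ (stepPoly F hFle (a 0) (ha 0) u hu) (fun k => a k.succ)
    (fun k => ha k.succ) u hu 0 (by norm_num)

theorem circle_theorem_general (n : ℕ) (hn : 1 ≤ n) (G : Polynomial ℝ)
    (hroots : ∀ z : ℂ, (G.map (algebraMap ℝ ℂ)).eval z = 0 → z.im = 0)
    (hdeg : n ≤ G.natDegree)
    (a : Fin n → ℝ) (ha : ∀ k, 0 < a k)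
    (t : ℂ)
    (ht : ∑ ε : Fin n → Bool,
        (G.map (algebraMap ℝ ℂ)).eval
          (I * (∑ k, (if ε k then (1 : ℂ) else -1) * (a k : ℂ)))
        * t ^ (Finset.univ.filter (fun k => ε k = true)).card = 0) :
    ‖t‖ = 1 := by
  by_contra hne
  rcases lt_or_gt_of_ne hne with hlt | hgt
  swap
  · exact big_ne_zero n hn G hroots a ha t hgt ht
  set Gc := G.map (algebraMap ℝ ℂ) with hGc
  set S : (Fin n → Bool) → ℂ := fun ε => ∑ k, (if ε k then (1 : ℂ) else -1) * (a k : ℂ)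
    with hS
  set N : (Fin n → Bool) → ℕ := fun ε => (Finset.univ.filter (fun k => ε k = true)).card
    with hN
  have hsumpos : 0 < ∑ k, a k :=
    Finset.sum_pos (fun k _ => ha k) ⟨⟨0, hn⟩, Finset.mem_univ _⟩
  by_cases ht0 : t = 0
  · -- t = 0 : only the all-false term survives
    subst ht0
    have hsingle : (∑ ε : Fin n → Bool, Gc.eval (I * S ε) * (0:ℂ) ^ N ε)
        = Gc.eval (I * S (fun _ => false)) * (0:ℂ) ^ N (fun _ => false) := by
      refine Finset.sum_eq_single _ (fun ε _ hε => ?_) (by simp)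
      have hNε : N ε ≠ 0 := by
        intro h0
        apply hε
        funext k
        cases hεk : ε k
        · rfl
        · exfalso
          have hmem : k ∈ Finset.univ.filter (fun k => ε k = true) := by simp [hεk]
          rw [hN] at h0
          simp only [Finset.card_eq_zero] at h0
          rw [h0] at hmem
          exact absurd hmem (Finset.notMem_empty k)
      rw [zero_pow hNε, mul_zero]
    have hN0 : N (fun _ => false) = 0 := by simp [hN]
    rw [hsingle, hN0, pow_zero, mul_one] at ht
    have him := hroots _ ht
    have hre : (S (fun _ => false)).re = - ∑ k, a k := by
      rw [hS]
      simp only [if_neg (by simp : ¬ (false = true))]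
      rw [Complex.re_sum]
      simp
    rw [Complex.mul_im, Complex.I_re, Complex.I_im, zero_mul, one_mul, zero_add, hre] at him
    linarith
  · -- 0 < |t| < 1 : use the symmetry
    have hconj : ∀ ε : Fin n → Bool,
        (starRingEnd ℂ) (Gc.eval (I * S ε)) = Gc.eval (I * S (fun k => !ε k)) := by
      intro ε
      have h1 : ∀ z : ℂ, (starRingEnd ℂ) (Gc.eval z) = Gc.eval ((starRingEnd ℂ) z) := by
        intro z
        rw [hGc, eval_map, eval_map, hom_eval₂]
        congr 1
        ext r
        simp [Complex.conj_ofReal]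
      have h2 : (starRingEnd ℂ) (S ε) = S ε := by
        rw [hS]
        simp only [map_sum, map_mul]
        refine Finset.sum_congr rfl fun k _ => ?_
        rcases Bool.eq_false_or_eq_true (ε k) with h | h <;>
          simp [h, Complex.conj_ofReal]
      have h3 : S (fun k => !ε k) = - S ε := by
        rw [hS]
        simp only
        rw [← Finset.sum_neg_distrib]
        refine Finset.sum_congr rfl fun k _ => ?_
        rcases Bool.eq_false_or_eq_true (ε k) with h | h <;> simp [h]
      rw [h1, map_mul, h2, Complex.conj_I, h3]
      congr 1
      ring
    have hNle : ∀ ε : Fin n → Bool, N ε ≤ n := fun ε =>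
      le_trans (Finset.card_filter_le _ _) (by simp)
    have hNnot : ∀ ε : Fin n → Bool, N (fun k => !ε k) = n - N ε := by
      intro ε
      have h1 : (Finset.univ.filter (fun k => (!ε k) = true))
          = Finset.univ.filter (fun k => ¬ (ε k = true)) := by
        refine Finset.filter_congr fun k _ => ?_
        rcases Bool.eq_false_or_eq_true (ε k) with h | h <;> simp [h]
      have h2 := Finset.card_filter_add_card_filter_not
        (s := Finset.univ (α := Fin n)) (p := fun k => ε k = true)
      simp only [Finset.card_univ, Fintype.card_fin] at h2
      rw [hN]
      simp only
      rw [h1]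
      omega
    set v := (starRingEnd ℂ) t with hv
    have hv0 : v ≠ 0 := by simpa [hv] using ht0
    have hnot_inv : Function.Bijective (fun ε : Fin n → Bool => fun k => !ε k) :=
      Function.Involutive.bijective (fun ε => by funext k; simp)
    have h0 : ∑ ε : Fin n → Bool, Gc.eval (I * S (fun k => !ε k)) * v ^ N ε = 0 := by
      have h0 := congrArg (starRingEnd ℂ) ht
      rw [map_sum, map_zero] at h0
      simp only [map_mul, map_pow] at h0
      rw [← h0]
      exact Finset.sum_congr rfl fun ε _ => by rw [hconj]
    have hconjsum : ∑ ε : Fin n → Bool, Gc.eval (I * S ε) * v ^ (n - N ε) = 0 := by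
      rw [← h0]
      refine Fintype.sum_bijective _ hnot_inv _ _ fun ε => ?_
      simp only [Bool.not_not]
      rw [hNnot]
    have habsv : ‖v‖ = ‖t‖ := Complex.norm_conj t
    have htpos : 0 < ‖t‖ := norm_pos_iff.mpr ht0
    have hu : 1 < ‖v⁻¹‖ := by
      rw [norm_inv, habsv]
      exact (one_lt_inv₀ htpos).mpr hlt
    have hfinal : ∑ ε : Fin n → Bool, Gc.eval (I * S ε) * (v⁻¹) ^ N ε = 0 := by
      have hmul := congrArg (· * (v⁻¹) ^ n) hconjsum
      simp only [Finset.sum_mul, zero_mul] at hmul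
      rw [← hmul]
      refine Finset.sum_congr rfl fun ε _ => ?_
      rw [mul_assoc]
      congr 1
      have hkn := hNle ε
      have hvn : v ^ n = v ^ (n - N ε) * v ^ N ε := by
        rw [← pow_add]; congr 1; omega
      refine Eq.symm ?_
      calc v ^ (n - N ε) * (v⁻¹) ^ n
          = v ^ (n - N ε) * (v ^ (n - N ε) * v ^ N ε)⁻¹ := by rw [inv_pow, ← hvn]
        _ = (v ^ N ε)⁻¹ := by
            rw [mul_inv, ← mul_assoc, mul_inv_cancel₀ (pow_ne_zero _ hv0), one_mul]
        _ = (v⁻¹) ^ N ε := by rw [inv_pow]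
    exact big_ne_zero n hn G hroots a ha v⁻¹ hu hfinal
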